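/- Let n > 2, let a_1, …, a_n be positive real numbers, and set S = ∑_{i=1}^n √(a_i); assume S < 1. Then the quadratic equation S²(S(√(a_1)+√(a_2)) − S² + 1)·t² − S(S² − 1)(√(a_1) − √(a_2))·t + (S² − 1)√(a_1 a_2) = 0 has two real solutions, both lying in the interval [−√(a_1)/S, √(a_2)/S], and for each such solution t the vector u = (√(a_1)/S + t, √(a_2)/S − t, √(a_3)/S, …, √(a_n)/S) has positive coordinates summing to 1 and satisfies ∑_{i=1}^n a_i/u_i = 1; consequently the n×n matrix with entries m_{ij} = u_i·(a_j/u_j) is a rank-one matrix in the standard simplex Δ^{nn−1} with m_{ii} = a_i for all i. -/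

import Mathlib

lemma rank_one_of_outer {n : ℕ} (M : Matrix (Fin n) (Fin n) ℝ) (u v : Fin n → ℝ)
    (hM : M = Matrix.of fun i j => u i * v j) (i0 : Fin n) (hne : M i0 i0 ≠ 0) :
    M.rank = 1 := by
  have hM' : M = Matrix.vecMulVec u v := hM
  refine le_antisymm ?_ ?_
  · calc M.rank = (Matrix.replicateCol (Fin 1) u * Matrix.replicateRow (Fin 1) v).rank := by
          rw [hM', Matrix.vecMulVec_eq (Fin 1)]
          rfl
      _ ≤ (Matrix.replicateCol (Fin 1) u).rank := Matrix.rank_mul_le_left _ _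
      _ ≤ Fintype.card (Fin 1) := Matrix.rank_le_card_width _
      _ = 1 := by simp
  · rw [Nat.one_le_iff_ne_zero, Matrix.rank, ← Nat.pos_iff_ne_zero]
    rw [Module.finrank_pos_iff_exists_ne_zero]
    refine ⟨⟨M.mulVec (Pi.single i0 1), ?_⟩, ?_⟩
    · exact ⟨Pi.single i0 1, rfl⟩
    · intro h
      have h2 : M.mulVec (Pi.single i0 1) = 0 := by
        simpa using congrArg Subtype.val h
      have h3 := congrFun h2 i0
      simp [Matrix.mulVec_single] at h3
      exact hne h3

lemma quad_key (S t b0 b1 a0 a1 : ℝ) (hS : 0 < S)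
    (ha0 : a0 = b0 ^ 2) (ha1 : a1 = b1 ^ 2)
    (hd0 : 0 < b0 + S * t) (hd1 : 0 < b1 - S * t)
    (hq : S ^ 2 * (S * (b0 + b1) - S ^ 2 + 1) * t ^ 2
      + -(S * (S ^ 2 - 1) * (b0 - b1)) * t + (S ^ 2 - 1) * (b0 * b1) = 0) :
    a0 / (b0 / S + t) + a1 / (b1 / S - t) + S * (S - b0 - b1) = 1 := by
  rw [ha0, ha1]
  have e0 : b0 / S + t = (b0 + S * t) / S := by field_simp <;> ring
  have e1 : b1 / S - t = (b1 - S * t) / S := by field_simp <;> ring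
  rw [e0, e1, div_div_eq_mul_div, div_div_eq_mul_div]
  rw [div_add_div _ _ hd0.ne' hd1.ne',
    div_add' _ _ _ (by positivity : (0:ℝ) < (b0 + S*t)*(b1 - S*t)).ne',
    div_eq_one_iff_eq (by positivity : (0:ℝ) < (b0 + S*t)*(b1 - S*t)).ne']
  linear_combination hq

set_option maxHeartbeats 1000000 in
theorem easy_completion_aux (n : ℕ) (hn : 2 < n) (a : Fin n → ℝ) (ha : ∀ i, 0 < a i)
    (S : ℝ) (hS : S = ∑ i, Real.sqrt (a i)) (hSlt : S < 1)
    (i0 i1 : Fin n) (h0 : (i0 : ℕ) = 0) (h1 : (i1 : ℕ) = 1) :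
    (∃ t₁ t₂ : ℝ, t₁ ≠ t₂ ∧
      (S ^ 2 * (S * (Real.sqrt (a i0) + Real.sqrt (a i1)) - S ^ 2 + 1) * t₁ ^ 2
        - S * (S ^ 2 - 1) * (Real.sqrt (a i0) - Real.sqrt (a i1)) * t₁
        + (S ^ 2 - 1) * Real.sqrt (a i0 * a i1) = 0) ∧
      (S ^ 2 * (S * (Real.sqrt (a i0) + Real.sqrt (a i1)) - S ^ 2 + 1) * t₂ ^ 2
        - S * (S ^ 2 - 1) * (Real.sqrt (a i0) - Real.sqrt (a i1)) * t₂
        + (S ^ 2 - 1) * Real.sqrt (a i0 * a i1) = 0)) ∧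
    (∀ t : ℝ,
      (S ^ 2 * (S * (Real.sqrt (a i0) + Real.sqrt (a i1)) - S ^ 2 + 1) * t ^ 2
        - S * (S ^ 2 - 1) * (Real.sqrt (a i0) - Real.sqrt (a i1)) * t
        + (S ^ 2 - 1) * Real.sqrt (a i0 * a i1) = 0) →
      t ∈ Set.Icc (-(Real.sqrt (a i0) / S)) (Real.sqrt (a i1) / S) ∧
      ∀ u : Fin n → ℝ,
        (u = fun i : Fin n =>
          if (i : ℕ) = 0 then Real.sqrt (a i) / S + t
          else if (i : ℕ) = 1 then Real.sqrt (a i) / S - t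
          else Real.sqrt (a i) / S) →
        ((∀ i, 0 < u i) ∧ (∑ i, u i = 1) ∧ (∑ i, a i / u i = 1) ∧
          (∀ M : Matrix (Fin n) (Fin n) ℝ, (M = Matrix.of fun i j => u i * (a j / u j)) →
            (∀ i j, 0 ≤ M i j) ∧ (∑ i, ∑ j, M i j = 1) ∧ M.rank = 1 ∧ ∀ i, M i i = a i))) := by
  have hb : ∀ i, 0 < Real.sqrt (a i) := fun i => Real.sqrt_pos.mpr (ha i)
  have hab : ∀ i, a i = Real.sqrt (a i) ^ 2 := fun i => (Real.sq_sqrt (ha i).le).symm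
  have hSpos : 0 < S := by
    rw [hS]; exact Finset.sum_pos (fun i _ => hb i) ⟨i0, Finset.mem_univ i0⟩
  have hS2 : S ^ 2 < 1 := by nlinarith
  have hne : i0 ≠ i1 := by
    intro h; rw [Fin.ext_iff, h0, h1] at h; omega
  set s : Finset (Fin n) := (Finset.univ.erase i0).erase i1 with hsdef
  have hsplit : ∀ f : Fin n → ℝ, ∑ i, f i = f i0 + f i1 + ∑ i ∈ s, f i := by
    intro f
    rw [← Finset.add_sum_erase _ f (Finset.mem_univ i0),
      ← Finset.add_sum_erase _ f (Finset.mem_erase.mpr ⟨hne.symm, Finset.mem_univ i1⟩)]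
    ring
  have hmem : ∀ i ∈ s, i ≠ i0 ∧ i ≠ i1 := by
    intro i hi
    simp only [hsdef, Finset.mem_erase, Finset.mem_univ, and_true] at hi
    exact ⟨hi.2, hi.1⟩
  have hrest : ∑ i ∈ s, Real.sqrt (a i) = S - Real.sqrt (a i0) - Real.sqrt (a i1) := by
    have h := hsplit (fun i => Real.sqrt (a i)); rw [← hS] at h; linarith
  have hsq01 : Real.sqrt (a i0 * a i1) = Real.sqrt (a i0) * Real.sqrt (a i1) :=
    Real.sqrt_mul (ha i0).le _
  obtain ⟨A, hAdef⟩ : ∃ A : ℝ,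
      A = S ^ 2 * (S * (Real.sqrt (a i0) + Real.sqrt (a i1)) - S ^ 2 + 1) := ⟨_, rfl⟩
  obtain ⟨B, hBdef⟩ : ∃ B : ℝ,
      B = -(S * (S ^ 2 - 1) * (Real.sqrt (a i0) - Real.sqrt (a i1))) := ⟨_, rfl⟩
  obtain ⟨C, hCdef⟩ : ∃ C : ℝ,
      C = (S ^ 2 - 1) * (Real.sqrt (a i0) * Real.sqrt (a i1)) := ⟨_, rfl⟩
  have hA : 0 < A := by
    rw [hAdef]
    have h2 : 0 < S * (Real.sqrt (a i0) + Real.sqrt (a i1)) := by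
      have := hb i0; have := hb i1; positivity
    have h3 : 0 < S * (Real.sqrt (a i0) + Real.sqrt (a i1)) - S ^ 2 + 1 := by linarith
    have h4 : 0 < S ^ 2 := by positivity
    exact mul_pos h4 h3
  have hC : C < 0 := by
    rw [hCdef]
    nlinarith [mul_pos (hb i0) (hb i1)]
  have hexpr : ∀ t : ℝ,
      S ^ 2 * (S * (Real.sqrt (a i0) + Real.sqrt (a i1)) - S ^ 2 + 1) * t ^ 2
        - S * (S ^ 2 - 1) * (Real.sqrt (a i0) - Real.sqrt (a i1)) * t
        + (S ^ 2 - 1) * Real.sqrt (a i0 * a i1)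
      = A * t ^ 2 + B * t + C := by
    intro t; rw [hsq01, hAdef, hBdef, hCdef]; ring
  obtain ⟨d, hddef⟩ : ∃ d : ℝ, d = B ^ 2 - 4 * A * C := ⟨_, rfl⟩
  have hd : 0 < d := by
    rw [hddef]; nlinarith [sq_nonneg B, mul_pos hA (neg_pos.mpr hC)]
  have hsd : 0 < Real.sqrt d := Real.sqrt_pos.mpr hd
  have hdisc : discrim A B C = Real.sqrt d * Real.sqrt d := by
    rw [discrim, Real.mul_self_sqrt hd.le, hddef]
  have hroot : ∀ t : ℝ, A * t ^ 2 + B * t + C = 0 ↔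
      t = (-B + Real.sqrt d) / (2 * A) ∨ t = (-B - Real.sqrt d) / (2 * A) := by
    intro t
    rw [show A * t ^ 2 + B * t + C = A * (t * t) + B * t + C by ring]
    exact quadratic_eq_zero_iff hA.ne' hdisc t
  constructor
  · refine ⟨(-B + Real.sqrt d) / (2 * A), (-B - Real.sqrt d) / (2 * A), ?_, ?_, ?_⟩
    · intro h
      rw [div_eq_div_iff (by positivity) (by positivity)] at h
      nlinarith
    · rw [hexpr]; exact (hroot _).mpr (Or.inl rfl)
    · rw [hexpr]; exact (hroot _).mpr (Or.inr rfl)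
  · intro t ht
    rw [hexpr] at ht
    have e0 : A * (-(Real.sqrt (a i0) / S)) ^ 2 + B * (-(Real.sqrt (a i0) / S)) + C
        = Real.sqrt (a i0) ^ 2 * (S * (Real.sqrt (a i0) + Real.sqrt (a i1))) := by
      rw [hAdef, hBdef, hCdef]
      field_simp
      ring
    have e1 : A * (Real.sqrt (a i1) / S) ^ 2 + B * (Real.sqrt (a i1) / S) + C
        = Real.sqrt (a i1) ^ 2 * (S * (Real.sqrt (a i0) + Real.sqrt (a i1))) := by
      rw [hAdef, hBdef, hCdef]
      field_simp
      ring
    have hE0 : 0 < Real.sqrt (a i0) ^ 2 * (S * (Real.sqrt (a i0) + Real.sqrt (a i1))) := by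
      have := hb i0; have := hb i1; positivity
    have hE1 : 0 < Real.sqrt (a i1) ^ 2 * (S * (Real.sqrt (a i0) + Real.sqrt (a i1))) := by
      have := hb i0; have := hb i1; positivity
    have hx0 : 0 < Real.sqrt (a i0) / S := div_pos (hb i0) hSpos
    have hx1 : 0 < Real.sqrt (a i1) / S := div_pos (hb i1) hSpos
    have hlow : -(Real.sqrt (a i0) / S) < t := by
      rcases lt_trichotomy t (-(Real.sqrt (a i0) / S)) with h | h | h
      · exfalso
        have ht0 : t < 0 := by linarith
        have h2 : t * (A * t + B) = -C := by linear_combination ht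
        have h3 : A * t + B < 0 := by
          by_contra hcon
          push_neg at hcon
          nlinarith
        have h4 : A * (t - Real.sqrt (a i0) / S) + B < 0 := by
          nlinarith [mul_pos hA hx0]
        have h5 : (t + Real.sqrt (a i0) / S) * (A * (t - Real.sqrt (a i0) / S) + B)
            = -(Real.sqrt (a i0) ^ 2 * (S * (Real.sqrt (a i0) + Real.sqrt (a i1)))) := by
          linear_combination ht - e0
        nlinarith [mul_pos (show (0:ℝ) < -(t + Real.sqrt (a i0) / S) by linarith)
          (show (0:ℝ) < -(A * (t - Real.sqrt (a i0) / S) + B) by linarith)]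
      · exfalso; rw [h] at ht; linarith [e0, hE0]
      · exact h
    have hupp : t < Real.sqrt (a i1) / S := by
      rcases lt_trichotomy t (Real.sqrt (a i1) / S) with h | h | h
      · exact h
      · exfalso; rw [h] at ht; linarith [e1, hE1]
      · exfalso
        have ht0 : 0 < t := by linarith
        have h2 : t * (A * t + B) = -C := by linear_combination ht
        have h3 : 0 < A * t + B := by
          by_contra hcon
          push_neg at hcon
          nlinarith
        have h4 : 0 < A * (t + Real.sqrt (a i1) / S) + B := by
          nlinarith [mul_pos hA hx1]
        have h5 : (t - Real.sqrt (a i1) / S) * (A * (t + Real.sqrt (a i1) / S) + B)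
            = -(Real.sqrt (a i1) ^ 2 * (S * (Real.sqrt (a i0) + Real.sqrt (a i1)))) := by
          linear_combination ht - e1
        nlinarith [mul_pos (show (0:ℝ) < t - Real.sqrt (a i1) / S by linarith) h4]
    refine ⟨⟨hlow.le, hupp.le⟩, ?_⟩
    intro u hu
    have hu0 : u i0 = Real.sqrt (a i0) / S + t := by rw [hu]; simp [h0]
    have hu1 : u i1 = Real.sqrt (a i1) / S - t := by rw [hu]; simp [h1]
    have hurest : ∀ i, i ≠ i0 → i ≠ i1 → u i = Real.sqrt (a i) / S := by
      intro i hi hi'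
      have hni0 : (i : ℕ) ≠ 0 := fun h => hi (Fin.ext (by rw [h, h0]))
      have hni1 : (i : ℕ) ≠ 1 := fun h => hi' (Fin.ext (by rw [h, h1]))
      rw [hu]; simp [hni0, hni1]
    have hu0pos : 0 < u i0 := by rw [hu0]; linarith
    have hu1pos : 0 < u i1 := by rw [hu1]; linarith
    have hupos : ∀ i, 0 < u i := by
      intro i
      by_cases hi : i = i0
      · rw [hi]; exact hu0pos
      by_cases hi' : i = i1
      · rw [hi']; exact hu1pos
      · rw [hurest i hi hi']; exact div_pos (hb i) hSpos
    have husum : ∑ i, u i = 1 := by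
      rw [hsplit u, hu0, hu1, Finset.sum_congr rfl
        (fun i hi => hurest i (hmem i hi).1 (hmem i hi).2),
        ← Finset.sum_div, hrest]
      field_simp <;> ring
    have hq' : A * t ^ 2 + B * t + C = 0 := ht
    rw [hAdef, hBdef, hCdef] at hq'
    have hdivsum : ∑ i, a i / u i = 1 := by
      rw [hsplit (fun i => a i / u i)]
      have hterm : ∀ i ∈ s, a i / u i = S * Real.sqrt (a i) := by
        intro i hi
        rw [hurest i (hmem i hi).1 (hmem i hi).2]
        rw [div_eq_iff (div_pos (hb i) hSpos).ne']
        field_simp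
        linear_combination hab i
      have hr : ∑ i ∈ s, a i / u i = S * (S - Real.sqrt (a i0) - Real.sqrt (a i1)) := by
        rw [Finset.sum_congr rfl hterm, ← Finset.mul_sum, hrest]
      rw [hr, hu0, hu1]
      have hd0 : 0 < Real.sqrt (a i0) + S * t := by
        have h9 : 0 < S * (Real.sqrt (a i0) / S + t) := mul_pos hSpos (hu0 ▸ hu0pos)
        calc (0:ℝ) < S * (Real.sqrt (a i0) / S + t) := h9
          _ = Real.sqrt (a i0) + S * t := by field_simp <;> ring
      have hd1 : 0 < Real.sqrt (a i1) - S * t := by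
        have h9 : 0 < S * (Real.sqrt (a i1) / S - t) := mul_pos hSpos (hu1 ▸ hu1pos)
        calc (0:ℝ) < S * (Real.sqrt (a i1) / S - t) := h9
          _ = Real.sqrt (a i1) - S * t := by field_simp <;> ring
      exact quad_key S t (Real.sqrt (a i0)) (Real.sqrt (a i1)) (a i0) (a i1)
        hSpos (hab i0) (hab i1) hd0 hd1 hq'
    refine ⟨hupos, husum, hdivsum, ?_⟩
    intro M hM
    have hMij : ∀ i j, M i j = u i * (a j / u j) := by
      intro i j; rw [hM]; rfl
    have hdiag : ∀ i, M i i = a i := by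
      intro i
      rw [hMij i i, mul_div_assoc', mul_div_cancel_left₀ _ (hupos i).ne']
    refine ⟨?_, ?_, ?_, hdiag⟩
    · intro i j
      rw [hMij i j]
      exact (mul_pos (hupos i) (div_pos (ha j) (hupos j))).le
    · calc ∑ i, ∑ j, M i j = ∑ i, ∑ j, u i * (a j / u j) := by
            refine Finset.sum_congr rfl fun i _ => Finset.sum_congr rfl fun j _ => hMij i j
        _ = ∑ i, u i * ∑ j, (a j / u j) := by
            refine Finset.sum_congr rfl fun i _ => (Finset.mul_sum _ _ _).symm
        _ = ∑ i, u i := by rw [hdivsum]; simp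
        _ = 1 := husum
    · refine rank_one_of_outer M u (fun j => a j / u j) hM i0 ?_
      rw [hdiag i0]
      exact (ha i0).ne'

/-- For `n > 2`, positive `aᵢ` with `S = ∑ √aᵢ < 1`, the quadratic of
Proposition `thm:easycompletion` has two real roots, both in
`[-√a₁/S, √a₂/S]`, and each root `t` gives a vector `u` with positive
coordinates summing to 1, with `∑ aᵢ/uᵢ = 1`, and hence a rank-one
completion `(uᵢ · aⱼ/uⱼ)` in the standard simplex with diagonal `a`. -/
theorem easy_completion (n : ℕ) (hn : 2 < n) (a : Fin n → ℝ) (ha : ∀ i, 0 < a i)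
    (S : ℝ) (hS : S = ∑ i, Real.sqrt (a i)) (hSlt : S < 1) :
    (∃ t₁ t₂ : ℝ, t₁ ≠ t₂ ∧
      (S ^ 2 * (S * (Real.sqrt (a ⟨0, by omega⟩) + Real.sqrt (a ⟨1, by omega⟩)) - S ^ 2 + 1) * t₁ ^ 2
        - S * (S ^ 2 - 1) * (Real.sqrt (a ⟨0, by omega⟩) - Real.sqrt (a ⟨1, by omega⟩)) * t₁
        + (S ^ 2 - 1) * Real.sqrt (a ⟨0, by omega⟩ * a ⟨1, by omega⟩) = 0) ∧
      (S ^ 2 * (S * (Real.sqrt (a ⟨0, by omega⟩) + Real.sqrt (a ⟨1, by omega⟩)) - S ^ 2 + 1) * t₂ ^ 2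
        - S * (S ^ 2 - 1) * (Real.sqrt (a ⟨0, by omega⟩) - Real.sqrt (a ⟨1, by omega⟩)) * t₂
        + (S ^ 2 - 1) * Real.sqrt (a ⟨0, by omega⟩ * a ⟨1, by omega⟩) = 0)) ∧
    (∀ t : ℝ,
      (S ^ 2 * (S * (Real.sqrt (a ⟨0, by omega⟩) + Real.sqrt (a ⟨1, by omega⟩)) - S ^ 2 + 1) * t ^ 2
        - S * (S ^ 2 - 1) * (Real.sqrt (a ⟨0, by omega⟩) - Real.sqrt (a ⟨1, by omega⟩)) * t
        + (S ^ 2 - 1) * Real.sqrt (a ⟨0, by omega⟩ * a ⟨1, by omega⟩) = 0) →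
      t ∈ Set.Icc (-(Real.sqrt (a ⟨0, by omega⟩) / S)) (Real.sqrt (a ⟨1, by omega⟩) / S) ∧
      ∀ u : Fin n → ℝ,
        (u = fun i : Fin n =>
          if (i : ℕ) = 0 then Real.sqrt (a i) / S + t
          else if (i : ℕ) = 1 then Real.sqrt (a i) / S - t
          else Real.sqrt (a i) / S) →
        ((∀ i, 0 < u i) ∧ (∑ i, u i = 1) ∧ (∑ i, a i / u i = 1) ∧
          (∀ M : Matrix (Fin n) (Fin n) ℝ, (M = Matrix.of fun i j => u i * (a j / u j)) →
            (∀ i j, 0 ≤ M i j) ∧ (∑ i, ∑ j, M i j = 1) ∧ M.rank = 1 ∧ ∀ i, M i i = a i))) :=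
  easy_completion_aux n hn a ha S hS hSlt ⟨0, by omega⟩ ⟨1, by omega⟩ rfl rfl
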